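/- Let f : Fin n → Fin n be drawn from the uniform measure, and let c(f) be the number of cycles of its functional digraph, i.e., the number of orbits of f on its cyclic states (equivalently, the number of clusters of f). Then the probability that c(f) > 5·ln n is o(1/n⁴); that is, n⁴ · P(c(f) > 5·ln n) → 0 as n → ∞. -/

import Mathlib

/-- Probability of the event `P` under the uniform measure on a finite type. -/
noncomputable def probOf (T : Type) [Fintype T] (P : T → Prop) : ℝ :=
  (Nat.card {x : T // P x} : ℝ) / (Nat.card T : ℝ)

/-- The cluster (weakly connected component) equivalence of the functional
digraph of `f`: the equivalence relation generated by `s ~ f s`. -/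
def sameCluster {Q : Type*} (f : Q → Q) : Q → Q → Prop :=
  Relation.EqvGen (fun s t => f s = t)

/-- The number of clusters (weakly connected components of the functional
digraph) of `f`; this equals the number of cycles of `f`. -/
noncomputable def numClusters {Q : Type*} (f : Q → Q) : ℕ :=
  Nat.card (Quotient (⟨sameCluster f, Relation.EqvGen.is_equivalence _⟩ : Setoid Q))

open Function Finset

/-! ### Dynamics of the cluster relation -/

section Dyn
variable {Q : Type*} (f : Q → Q)

lemma sameCluster_iterate (a : ℕ) (x : Q) : sameCluster f x (f^[a] x) := by
  induction a with
  | zero => exact Relation.EqvGen.refl x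
  | succ a ih =>
    refine Relation.EqvGen.trans _ _ _ ih ?_
    exact Relation.EqvGen.rel _ _ (by rw [← Function.iterate_succ_apply' f a x])

lemma sameCluster_iff {x y : Q} : sameCluster f x y ↔ ∃ a b, f^[a] x = f^[b] y := by
  constructor
  · intro h
    induction h with
    | rel s t hst => exact ⟨1, 0, by simpa using hst⟩
    | refl s => exact ⟨0, 0, rfl⟩
    | symm s t _ ih => obtain ⟨a, b, h⟩ := ih; exact ⟨b, a, h.symm⟩
    | trans s t u _ _ ih1 ih2 =>
      obtain ⟨a, b, h1⟩ := ih1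
      obtain ⟨c, d, h2⟩ := ih2
      refine ⟨c + a, b + d, ?_⟩
      rw [Function.iterate_add_apply, h1, ← Function.iterate_add_apply,
        Nat.add_comm c b, Function.iterate_add_apply, h2, ← Function.iterate_add_apply]
  · rintro ⟨a, b, h⟩
    exact Relation.EqvGen.trans _ _ _ (sameCluster_iterate f a x)
      (h ▸ (sameCluster_iterate f b y).symm _ _)

lemma sameCluster_of_iterate_eq {x y : Q} {a b : ℕ} (h : f^[a] x = f^[b] y) :
    sameCluster f x y := (sameCluster_iff f).2 ⟨a, b, h⟩

/-- If `y` is periodic and in the same cluster as `x`, then some iterate of `x` hits `y`. -/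
lemma exists_iterate_eq_of_sameCluster {x y : Q} (hy : y ∈ periodicPts f)
    (h : sameCluster f x y) : ∃ t, f^[t] x = y := by
  obtain ⟨a, b, hab⟩ := (sameCluster_iff f).1 h
  obtain ⟨p, hp, hyp⟩ := Function.mem_periodicPts.1 hy
  refine ⟨(b * p - b) + a, ?_⟩
  have hb : b ≤ b * p := Nat.le_mul_of_pos_right b hp
  rw [Function.iterate_add_apply, hab, ← Function.iterate_add_apply,
    Nat.sub_add_cancel hb]
  have := hyp.mul_const b
  rw [Nat.mul_comm] at this
  exact this

lemma exists_periodic_sameCluster [Finite Q] (x : Q) :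
    ∃ y, y ∈ periodicPts f ∧ sameCluster f x y := by
  have : ¬ Function.Injective (fun k : ℕ => f^[k] x) :=
    not_injective_infinite_finite _
  rw [Function.not_injective_iff] at this
  obtain ⟨a, b, hab, hne⟩ := this
  rcases Nat.lt_or_ge a b with h | h
  · refine ⟨f^[a] x, ?_, sameCluster_iterate f a x⟩
    refine Function.mk_mem_periodicPts (n := b - a) (by omega) ?_
    show f^[b-a] (f^[a] x) = f^[a] x
    rw [← Function.iterate_add_apply, Nat.sub_add_cancel (le_of_lt h)]
    exact hab.symm
  · have h' : b < a := by omega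
    refine ⟨f^[b] x, ?_, sameCluster_iterate f b x⟩
    refine Function.mk_mem_periodicPts (n := a - b) (by omega) ?_
    show f^[a-b] (f^[b] x) = f^[b] x
    rw [← Function.iterate_add_apply, Nat.sub_add_cancel (le_of_lt h')]
    exact hab

end Dyn

/-- The setoid of clusters. -/
def cSetoid {Q : Type*} (f : Q → Q) : Setoid Q :=
  ⟨sameCluster f, Relation.EqvGen.is_equivalence _⟩

lemma sameCluster_equivalence {Q : Type*} (f : Q → Q) : Equivalence (sameCluster f) :=
  Relation.EqvGen.is_equivalence _

/-! ### Step A: the factorial-moment identity for a fixed function -/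

section StepA
variable {n : ℕ} (f : Fin n → Fin n)

open scoped Classical

/-- For any cluster class, the sum of reciprocal minimal periods over its periodic points is 1. -/
lemma sum_class (κ : Quotient (cSetoid f)) :
    ∑ x ∈ univ.filter (fun x : Fin n =>
        x ∈ periodicPts f ∧ Quotient.mk (cSetoid f) x = κ), ((minimalPeriod f x : ℝ))⁻¹ = 1 := by
  obtain ⟨x₀, hx₀, hcl⟩ := exists_periodic_sameCluster f κ.out
  have hκ : Quotient.mk (cSetoid f) x₀ = κ := by
    rw [← Quotient.out_eq κ]
    exact Quotient.sound ((sameCluster_equivalence f).symm hcl)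
  set ℓ := minimalPeriod f x₀ with hℓdef
  have hℓ : 0 < ℓ := minimalPeriod_pos_of_mem_periodicPts hx₀
  have hset : univ.filter (fun x : Fin n =>
      x ∈ periodicPts f ∧ Quotient.mk (cSetoid f) x = κ)
      = (range ℓ).image (fun t => f^[t] x₀) := by
    ext x
    simp only [mem_filter, mem_univ, true_and, mem_image, mem_range]
    constructor
    · rintro ⟨hx, hxκ⟩
      have : sameCluster f x₀ x := by
        have := Quotient.exact (hκ.trans hxκ.symm)
        exact this
      obtain ⟨t, ht⟩ := exists_iterate_eq_of_sameCluster f hx this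
      exact ⟨t % ℓ, Nat.mod_lt _ hℓ, by rw [iterate_mod_minimalPeriod_eq, ht]⟩
    · rintro ⟨t, _, rfl⟩
      refine ⟨?_, ?_⟩
      · obtain ⟨p, hp, hperiod⟩ := Function.mem_periodicPts.1 hx₀
        exact Function.mk_mem_periodicPts hp (hperiod.apply_iterate t)
      · rw [← hκ]
        exact Quotient.sound ((sameCluster_equivalence f).symm (sameCluster_iterate f t x₀))
  rw [hset, Finset.sum_image ?inj]
  case inj =>
    intro a ha b hb hab
    exact iterate_injOn_Iio_minimalPeriod (by simpa using mem_range.1 ha)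
      (by simpa using mem_range.1 hb) hab
  have : ∀ t ∈ range ℓ, ((minimalPeriod f (f^[t] x₀) : ℝ))⁻¹ = (ℓ : ℝ)⁻¹ := by
    intro t _
    rw [minimalPeriod_apply_iterate hx₀]
  rw [Finset.sum_congr rfl this, Finset.sum_const, card_range, nsmul_eq_mul]
  field_simp

/-- The tuples finset: `j`-tuples of periodic points in pairwise distinct clusters. -/
noncomputable def Tj (j : ℕ) : Finset (Fin j → Fin n) :=
  univ.filter (fun x => (∀ i, x i ∈ periodicPts f) ∧
    ∀ ⦃i i'⦄, i ≠ i' → ¬ sameCluster f (x i) (x i'))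

lemma stepA (j : ℕ) :
    ∑ x ∈ Tj f j, ∏ i, ((minimalPeriod f (x i) : ℝ))⁻¹
      = ((numClusters f).descFactorial j : ℝ) := by
  classical
  set K := Quotient (cSetoid f)
  have hmaps : ∀ x ∈ Tj f j, (fun i => Quotient.mk (cSetoid f) (x i)) ∈
      univ.filter (Function.Injective (α := Fin j) (β := K)) := by
    intro x hx
    simp only [Tj, mem_filter, mem_univ, true_and] at hx ⊢
    intro i i' h
    by_contra hne
    exact hx.2 hne (Quotient.exact h)
  rw [← Finset.sum_fiberwise_of_maps_to hmaps]
  have hfib : ∀ φ ∈ univ.filter (Function.Injective (α := Fin j) (β := K)),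
      (Tj f j).filter (fun x => (fun i => Quotient.mk (cSetoid f) (x i)) = φ)
        = Fintype.piFinset (fun i => univ.filter
            (fun x : Fin n => x ∈ periodicPts f ∧ Quotient.mk (cSetoid f) x = φ i)) := by
    intro φ hφ
    simp only [mem_filter, mem_univ, true_and] at hφ
    ext x
    simp only [mem_filter, Fintype.mem_piFinset, mem_univ, true_and, Tj, funext_iff]
    constructor
    · rintro ⟨⟨hper, _⟩, hcls⟩ i
      exact ⟨hper i, hcls i⟩
    · intro h
      refine ⟨⟨fun i => (h i).1, ?_⟩, fun i => (h i).2⟩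
      intro i i' hne hsc
      exact hne (hφ (((h i).2.symm.trans (Quotient.sound hsc)).trans (h i').2))
  rw [Finset.sum_congr rfl (fun φ hφ => by rw [hfib φ hφ])]
  have hinner : ∀ φ ∈ univ.filter (Function.Injective (α := Fin j) (β := K)),
      ∑ x ∈ Fintype.piFinset (fun i => univ.filter
          (fun x : Fin n => x ∈ periodicPts f ∧ Quotient.mk (cSetoid f) x = φ i)),
        ∏ i, ((minimalPeriod f (x i) : ℝ))⁻¹ = 1 := by
    intro φ _
    have := Finset.prod_univ_sum
      (fun i : Fin j => univ.filter
          (fun x : Fin n => x ∈ periodicPts f ∧ Quotient.mk (cSetoid f) x = φ i))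
      (fun _ y => ((minimalPeriod f y : ℝ))⁻¹)
    rw [← this, Finset.prod_congr rfl (fun i _ => sum_class f (φ i))]
    simp
  rw [Finset.sum_congr rfl hinner, Finset.sum_const]
  have hcard : #(univ.filter (Function.Injective (α := Fin j) (β := K)))
      = (numClusters f).descFactorial j := by
    have h1 : #(univ.filter (Function.Injective (α := Fin j) (β := K)))
        = Fintype.card {g : Fin j → K // Function.Injective g} :=
      (Fintype.card_subtype _).symm
    rw [h1, Fintype.card_congr (Equiv.subtypeInjectiveEquivEmbedding (Fin j) K),
      Fintype.card_embedding_eq, Fintype.card_fin,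
      show numClusters f = Fintype.card K from Nat.card_eq_fintype_card]
  rw [hcard, nsmul_eq_mul, mul_one]

end StepA

/-! ### Step B: counting pairs with prescribed periods -/

open scoped Classical in
/-- The finset of pairs `(f, x⃗)` where `x⃗` is a tuple of periodic points of `f` in
pairwise distinct clusters, with prescribed minimal periods `ℓ`. -/
noncomputable def Dset (n : ℕ) {j : ℕ} (ℓ : Fin j → ℕ) :
    Finset ((Fin n → Fin n) × (Fin j → Fin n)) :=
  univ.filter (fun p =>
    ((∀ i, p.2 i ∈ periodicPts p.1) ∧
      (∀ ⦃i i'⦄, i ≠ i' → ¬ sameCluster p.1 (p.2 i) (p.2 i'))) ∧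
    ∀ i, minimalPeriod p.1 (p.2 i) = ℓ i)

section StepB
variable {n j : ℕ} (ℓ : Fin j → ℕ)

open scoped Classical

/-- The orbit-listing map. -/
def emap (p : (Fin n → Fin n) × (Fin j → Fin n)) : (Σ i : Fin j, Fin (ℓ i)) → Fin n :=
  fun q => p.1^[q.2.val] (p.2 q.1)

lemma emap_injective {p} (hp : p ∈ Dset n ℓ) : Function.Injective (emap ℓ p) := by
  simp only [Dset, mem_filter, mem_univ, true_and] at hp
  obtain ⟨⟨hper, hpair⟩, hmp⟩ := hp
  rintro ⟨i, t⟩ ⟨i', t'⟩ h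
  by_cases hii : i = i'
  · subst hii
    have ht : (t : ℕ) = (t' : ℕ) := by
      refine iterate_injOn_Iio_minimalPeriod (f := p.1) (x := p.2 i) ?_ ?_ h
      · simp [hmp i]
      · simp [hmp i]
    exact congrArg _ (Fin.ext ht)
  · exact absurd (sameCluster_of_iterate_eq p.1 h) (hpair hii)

lemma emap_zero {p : (Fin n → Fin n) × (Fin j → Fin n)} (hℓ : ∀ i, 0 < ℓ i) (i : Fin j) :
    emap ℓ p ⟨i, ⟨0, hℓ i⟩⟩ = p.2 i := rfl

lemma emap_apply {p} (hp : p ∈ Dset n ℓ) (hℓ : ∀ i, 0 < ℓ i) (q : Σ i : Fin j, Fin (ℓ i)) :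
    p.1 (emap ℓ p q) = emap ℓ p ⟨q.1, ⟨((q.2 : ℕ) + 1) % ℓ q.1, Nat.mod_lt _ (hℓ q.1)⟩⟩ := by
  simp only [Dset, mem_filter, mem_univ, true_and] at hp
  obtain ⟨⟨hper, hpair⟩, hmp⟩ := hp
  have gen : ∀ (x : Fin n) (i : Fin j), minimalPeriod p.1 x = ℓ i → ∀ tv : ℕ,
      p.1 (p.1^[tv] x) = p.1^[(tv + 1) % ℓ i] x := by
    intro x i hx tv
    rw [← Function.iterate_succ_apply' p.1, ← hx, iterate_mod_minimalPeriod_eq]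
  exact gen (p.2 q.1) q.1 (hmp q.1) (q.2 : ℕ)

lemma cardD_le (hℓ : ∀ i, 0 < ℓ i) :
    #(Dset n ℓ) ≤ n ^ n := by
  rcases Finset.eq_empty_or_nonempty (Dset n ℓ) with h | ⟨p₀, hp₀⟩
  · simp [h]
  set σ := (Σ i : Fin j, Fin (ℓ i)) with hσ
  set m := ∑ i, ℓ i with hm
  have hcardσ : Fintype.card σ = m := by
    simp [hσ, Fintype.card_sigma, hm]
  letI : Inhabited (σ ↪ Fin n) := ⟨⟨emap ℓ p₀, emap_injective ℓ hp₀⟩⟩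
  have hmn : m ≤ n := by
    have := Fintype.card_le_of_embedding (default : σ ↪ Fin n)
    simpa [hcardσ] using this
  set π : (Fin n → Fin n) × (Fin j → Fin n) → (σ ↪ Fin n) :=
    fun p => if h : p ∈ Dset n ℓ then ⟨emap ℓ p, emap_injective ℓ h⟩ else default with hπ
  have key : ∀ E : σ ↪ Fin n,
      #((Dset n ℓ).filter (fun p => π p = E)) ≤ n ^ (n - m) := by
    intro E
    set S : Finset (Fin n) := Finset.image (⇑E) univ with hS
    have hScard : #S = m := by
      rw [hS, Finset.card_image_of_injective _ E.injective, card_univ, hcardσ]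
    have hcompl : #(Sᶜ) = n - m := by
      rw [Finset.card_compl, hScard, Fintype.card_fin]
    have htarget : Fintype.card ({y : Fin n // y ∈ Sᶜ} → Fin n) = n ^ (n - m) := by
      rw [Fintype.card_fun, Fintype.card_coe, hcompl, Fintype.card_fin]
    rw [← htarget, ← Finset.card_univ]
    apply Finset.card_le_card_of_injOn
      (fun p => (fun y : {y : Fin n // y ∈ Sᶜ} => p.1 y.1))
    · intro p _; exact mem_univ _
    · intro p hp p' hp' hfg
      simp only [Finset.mem_coe, mem_filter] at hp hp'
      obtain ⟨hpD, hpE⟩ := hp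
      obtain ⟨hp'D, hp'E⟩ := hp'
      have hepE : emap ℓ p = ⇑E := by
        rw [hπ] at hpE; simp only [hpD, dif_pos] at hpE
        exact congrArg DFunLike.coe hpE
      have hep'E : emap ℓ p' = ⇑E := by
        rw [hπ] at hp'E; simp only [hp'D, dif_pos] at hp'E
        exact congrArg DFunLike.coe hp'E
      have hx : p.2 = p'.2 := by
        funext i
        rw [← emap_zero ℓ hℓ i, ← emap_zero (p := p') ℓ hℓ i, hepE, hep'E]
      have hf : p.1 = p'.1 := by
        funext y
        by_cases hy : y ∈ S
        · rw [hS] at hy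
          obtain ⟨q, _, rfl⟩ := Finset.mem_image.1 hy
          have h1 : p.1 (E q) = E ⟨q.1, ⟨((q.2 : ℕ) + 1) % ℓ q.1, Nat.mod_lt _ (hℓ q.1)⟩⟩ := by
            rw [← hepE]; exact emap_apply ℓ hpD hℓ q
          have h2 : p'.1 (E q) = E ⟨q.1, ⟨((q.2 : ℕ) + 1) % ℓ q.1, Nat.mod_lt _ (hℓ q.1)⟩⟩ := by
            rw [← hep'E]; exact emap_apply ℓ hp'D hℓ q
          rw [h1, h2]
        · have : y ∈ Sᶜ := Finset.mem_compl.2 hy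
          exact congrFun hfg ⟨y, this⟩
      exact Prod.ext hf hx
  calc #(Dset n ℓ) = ∑ E ∈ (Dset n ℓ).image π, #((Dset n ℓ).filter (fun p => π p = E)) :=
        Finset.card_eq_sum_card_image π (Dset n ℓ)
    _ ≤ ∑ E ∈ (Dset n ℓ).image π, n ^ (n - m) := Finset.sum_le_sum (fun E _ => key E)
    _ = #((Dset n ℓ).image π) * n ^ (n - m) := by rw [Finset.sum_const, smul_eq_mul]
    _ ≤ Fintype.card (σ ↪ Fin n) * n ^ (n - m) := by
        gcongr
        exact le_trans (Finset.card_le_univ _) (le_of_eq card_univ)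
    _ = n.descFactorial m * n ^ (n - m) := by
        rw [Fintype.card_embedding_eq, hcardσ, Fintype.card_fin]
    _ ≤ n ^ m * n ^ (n - m) := by gcongr; exact Nat.descFactorial_le_pow _ _
    _ = n ^ n := by rw [← pow_add, Nat.add_sub_cancel' hmn]

end StepB

/-! ### Assembling the moment bounds -/

section Asm
variable (n : ℕ)

open scoped Classical

noncomputable def Hn : ℝ := ∑ ℓ ∈ Finset.Icc 1 n, ((ℓ : ℝ))⁻¹

lemma Hn_nonneg : 0 ≤ Hn n := Finset.sum_nonneg fun _ _ => by positivity

lemma minimalPeriod_le_card {f : Fin n → Fin n} {x : Fin n} : minimalPeriod f x ≤ n := by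
  have hinj : Set.InjOn (fun t => f^[t] x) ↑(range (minimalPeriod f x)) := by
    rw [Finset.coe_range]
    exact iterate_injOn_Iio_minimalPeriod
  calc minimalPeriod f x = #(range (minimalPeriod f x)) := (card_range _).symm
    _ = #((range (minimalPeriod f x)).image (fun t => f^[t] x)) :=
        (Finset.card_image_of_injOn hinj).symm
    _ ≤ Fintype.card (Fin n) := by rw [← card_univ]; exact Finset.card_le_univ _
    _ = n := Fintype.card_fin n

/-- Step B: the `j`-th factorial moment bound. -/
lemma sum_descFactorial_le (j : ℕ) :
    ∑ f : Fin n → Fin n, (((numClusters f).descFactorial j : ℕ) : ℝ)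
      ≤ (n : ℝ) ^ n * Hn n ^ j := by
  have hsum : ∑ f : Fin n → Fin n, (((numClusters f).descFactorial j : ℕ) : ℝ)
      = ∑ p ∈ (univ : Finset ((Fin n → Fin n) × (Fin j → Fin n))).filter
          (fun p => (∀ i, p.2 i ∈ periodicPts p.1) ∧
            ∀ ⦃i i'⦄, i ≠ i' → ¬ sameCluster p.1 (p.2 i) (p.2 i')),
          ∏ i, ((minimalPeriod p.1 (p.2 i) : ℝ))⁻¹ := by
    rw [Finset.sum_filter, Fintype.sum_prod_type]
    refine Finset.sum_congr rfl (fun f _ => ?_)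
    rw [← stepA f j, Tj, Finset.sum_filter]
  rw [hsum]
  have hmaps : ∀ p ∈ (univ : Finset ((Fin n → Fin n) × (Fin j → Fin n))).filter
      (fun p => (∀ i, p.2 i ∈ periodicPts p.1) ∧
        ∀ ⦃i i'⦄, i ≠ i' → ¬ sameCluster p.1 (p.2 i) (p.2 i')),
      (fun i => minimalPeriod p.1 (p.2 i)) ∈
        Fintype.piFinset (fun _ : Fin j => Finset.Icc 1 n) := by
    intro p hp
    simp only [mem_filter, mem_univ, true_and] at hp
    rw [Fintype.mem_piFinset]
    intro i
    rw [Finset.mem_Icc]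
    exact ⟨minimalPeriod_pos_of_mem_periodicPts (hp.1 i), minimalPeriod_le_card n⟩
  rw [← Finset.sum_fiberwise_of_maps_to hmaps]
  have hfib : ∀ ℓ ∈ Fintype.piFinset (fun _ : Fin j => Finset.Icc 1 n),
      ∑ p ∈ ((univ : Finset ((Fin n → Fin n) × (Fin j → Fin n))).filter
          (fun p => (∀ i, p.2 i ∈ periodicPts p.1) ∧
            ∀ ⦃i i'⦄, i ≠ i' → ¬ sameCluster p.1 (p.2 i) (p.2 i'))).filter
            (fun p => (fun i => minimalPeriod p.1 (p.2 i)) = ℓ),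
        ∏ i, ((minimalPeriod p.1 (p.2 i) : ℝ))⁻¹
      ≤ (n : ℝ) ^ n * ∏ i, ((ℓ i : ℝ))⁻¹ := by
    intro ℓ hℓmem
    have hℓ : ∀ i, 0 < ℓ i := by
      rw [Fintype.mem_piFinset] at hℓmem
      intro i; exact (Finset.mem_Icc.1 (hℓmem i)).1
    have hDeq : ((univ : Finset ((Fin n → Fin n) × (Fin j → Fin n))).filter
          (fun p => (∀ i, p.2 i ∈ periodicPts p.1) ∧
            ∀ ⦃i i'⦄, i ≠ i' → ¬ sameCluster p.1 (p.2 i) (p.2 i'))).filter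
            (fun p => (fun i => minimalPeriod p.1 (p.2 i)) = ℓ) = Dset n ℓ := by
      rw [Dset, Finset.filter_filter]
      apply Finset.filter_congr
      intro p _
      simp only [funext_iff]
    rw [hDeq]
    have hconst : ∀ p ∈ Dset n ℓ,
        ∏ i, ((minimalPeriod p.1 (p.2 i) : ℝ))⁻¹ = ∏ i, ((ℓ i : ℝ))⁻¹ := by
      intro p hp
      simp only [Dset, mem_filter, mem_univ, true_and] at hp
      exact Finset.prod_congr rfl (fun i _ => by rw [hp.2 i])
    rw [Finset.sum_congr rfl hconst, Finset.sum_const, nsmul_eq_mul]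
    refine mul_le_mul_of_nonneg_right ?_ (Finset.prod_nonneg fun i _ => by positivity)
    calc (#(Dset n ℓ) : ℝ) ≤ ((n ^ n : ℕ) : ℝ) := by exact_mod_cast cardD_le ℓ hℓ
      _ = (n : ℝ) ^ n := by push_cast; ring
  calc ∑ ℓ ∈ Fintype.piFinset (fun _ : Fin j => Finset.Icc 1 n), _
      ≤ ∑ ℓ ∈ Fintype.piFinset (fun _ : Fin j => Finset.Icc 1 n),
          (n : ℝ) ^ n * ∏ i, ((ℓ i : ℝ))⁻¹ := Finset.sum_le_sum hfib
    _ = (n : ℝ) ^ n * ∑ ℓ ∈ Fintype.piFinset (fun _ : Fin j => Finset.Icc 1 n),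
          ∏ i, ((ℓ i : ℝ))⁻¹ := by rw [← Finset.mul_sum]
    _ = (n : ℝ) ^ n * Hn n ^ j := by
        rw [← Finset.prod_univ_sum (fun _ : Fin j => Finset.Icc 1 n)
          (fun _ (y : ℕ) => ((y : ℝ))⁻¹)]
        rw [Finset.prod_const, Hn, card_univ, Fintype.card_fin]

/-- The exponential moment bound. -/
lemma sum_five_pow_le :
    ∑ f : Fin n → Fin n, (5 : ℝ) ^ (numClusters f)
      ≤ (n : ℝ) ^ n * Real.exp (4 * Hn n) := by
  have hC : ∀ f : Fin n → Fin n, numClusters f ≤ n := by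
    intro f
    have : numClusters f ≤ Nat.card (Fin n) :=
      Nat.card_le_card_of_surjective _ Quotient.mk''_surjective
    simpa using this
  have hpow : ∀ f : Fin n → Fin n, (5 : ℝ) ^ (numClusters f)
      = ∑ k ∈ range (n + 1), (4 : ℝ) ^ k * ((numClusters f).choose k : ℝ) := by
    intro f
    have h45 : (5 : ℝ) = 4 + 1 := by norm_num
    rw [h45, add_pow]
    simp only [one_pow, mul_one]
    rw [Finset.sum_subset (Finset.range_subset_range.2 (Nat.succ_le_succ (hC f)))]
    intro k _ hk
    rw [Nat.choose_eq_zero_of_lt (by simpa using hk)]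
    simp
  calc ∑ f : Fin n → Fin n, (5 : ℝ) ^ (numClusters f)
      = ∑ f : Fin n → Fin n, ∑ k ∈ range (n + 1),
          (4 : ℝ) ^ k * ((numClusters f).choose k : ℝ) :=
        Finset.sum_congr rfl (fun f _ => hpow f)
    _ = ∑ k ∈ range (n + 1), (4 : ℝ) ^ k *
          ∑ f : Fin n → Fin n, ((numClusters f).choose k : ℝ) := by
        rw [Finset.sum_comm]
        exact Finset.sum_congr rfl (fun k _ => by rw [Finset.mul_sum])
    _ ≤ ∑ k ∈ range (n + 1), (4 : ℝ) ^ k * ((n : ℝ) ^ n * Hn n ^ k / k.factorial) := by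
        refine Finset.sum_le_sum (fun k _ => ?_)
        refine mul_le_mul_of_nonneg_left ?_ (by positivity)
        rw [div_eq_inv_mul, ← mul_le_mul_iff_right₀
          (show (0:ℝ) < (k.factorial : ℝ) from by positivity), ← mul_assoc, ← mul_assoc,
          mul_inv_cancel₀ (show ((k.factorial : ℕ) : ℝ) ≠ 0 from by positivity), one_mul,
          Finset.mul_sum]
        calc ∑ f : Fin n → Fin n, (k.factorial : ℝ) * ((numClusters f).choose k : ℝ)
            = ∑ f : Fin n → Fin n, (((numClusters f).descFactorial k : ℕ) : ℝ) := by
              refine Finset.sum_congr rfl (fun f _ => ?_)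
              rw [Nat.descFactorial_eq_factorial_mul_choose]
              push_cast; ring
          _ ≤ (n : ℝ) ^ n * Hn n ^ k := sum_descFactorial_le n k
    _ = (n : ℝ) ^ n * ∑ k ∈ range (n + 1), (4 * Hn n) ^ k / k.factorial := by
        rw [Finset.mul_sum]
        refine Finset.sum_congr rfl (fun k _ => ?_)
        rw [mul_pow]; ring
    _ ≤ (n : ℝ) ^ n * Real.exp (4 * Hn n) := by
        refine mul_le_mul_of_nonneg_left ?_ (by positivity)
        exact Real.sum_le_exp_of_nonneg (mul_nonneg (by norm_num) (Hn_nonneg n)) (n + 1)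

end Asm

/-! ### Final estimates -/

section Final

open scoped Classical

lemma Hn_le (n : ℕ) : Hn n ≤ 1 + Real.log n := by
  have h := harmonic_le_one_add_log n
  have he : (harmonic n : ℝ) = Hn n := by
    rw [harmonic_eq_sum_Icc, Hn]
    push_cast
    rfl
  rw [he] at h
  exact h

lemma log_five_gt : (8 : ℝ) / 5 < Real.log 5 := by
  rw [Real.lt_log_iff_exp_lt (by norm_num)]
  have h8 : Real.exp ((8:ℝ)/5) ^ (5 : ℕ) < 5 ^ (5 : ℕ) := by
    rw [← Real.exp_nat_mul]
    have : (5 : ℕ) * ((8:ℝ)/5) = 8 := by norm_num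
    rw [this]
    have h1 : Real.exp 8 = Real.exp 1 ^ (8 : ℕ) := by
      rw [← Real.exp_nat_mul]; norm_num
    rw [h1]
    calc Real.exp 1 ^ (8:ℕ) < 2.7182818286 ^ (8:ℕ) :=
          pow_lt_pow_left₀ Real.exp_one_lt_d9 (Real.exp_pos 1).le (by norm_num)
      _ < 5 ^ (5:ℕ) := by norm_num
  exact lt_of_pow_lt_pow_left₀ 5 (by norm_num) h8

lemma main_bound {n : ℕ} (hn : 1 ≤ n) :
    (n : ℝ) ^ 4 * probOf (Fin n → Fin n) (fun f => 5 * Real.log n < (numClusters f : ℝ))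
      ≤ Real.exp 4 * (n : ℝ) ^ ((8 : ℝ) - 5 * Real.log 5) := by
  have hn0 : (0 : ℝ) < n := by exact_mod_cast hn
  set L := Real.log n with hL
  have hL0 : 0 ≤ L := Real.log_natCast_nonneg n
  set P : (Fin n → Fin n) → Prop := fun f => 5 * L < (numClusters f : ℝ) with hP
  have hcount : (Nat.card {f : Fin n → Fin n // P f} : ℝ) * (5 : ℝ) ^ (5 * L)
      ≤ (n : ℝ) ^ n * Real.exp (4 * Hn n) := by
    rw [Nat.card_eq_fintype_card, Fintype.card_subtype]
    calc (#(univ.filter P) : ℝ) * (5 : ℝ) ^ (5 * L)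
        = ∑ _f ∈ univ.filter P, (5 : ℝ) ^ (5 * L) := by
          rw [Finset.sum_const, nsmul_eq_mul]
      _ ≤ ∑ f ∈ univ.filter P, (5 : ℝ) ^ (numClusters f) := by
          refine Finset.sum_le_sum (fun f hf => ?_)
          have hPf : 5 * L < (numClusters f : ℝ) := (Finset.mem_filter.1 hf).2
          have : (5 : ℝ) ^ (numClusters f) = (5 : ℝ) ^ ((numClusters f : ℕ) : ℝ) :=
            (Real.rpow_natCast 5 (numClusters f)).symm
          rw [this]
          exact Real.rpow_le_rpow_of_exponent_le (by norm_num) hPf.le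
      _ ≤ ∑ f : Fin n → Fin n, (5 : ℝ) ^ (numClusters f) :=
          Finset.sum_le_sum_of_subset_of_nonneg (Finset.filter_subset _ _)
            (fun f _ _ => by positivity)
      _ ≤ (n : ℝ) ^ n * Real.exp (4 * Hn n) := sum_five_pow_le n
  have hden : (Nat.card (Fin n → Fin n) : ℝ) = (n : ℝ) ^ n := by
    rw [Nat.card_eq_fintype_card, Fintype.card_fun, Fintype.card_fin]
    push_cast; ring
  have h5pos : (0 : ℝ) < (5 : ℝ) ^ (5 * L) := Real.rpow_pos_of_pos (by norm_num) _
  have hprob : probOf (Fin n → Fin n) P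
      ≤ Real.exp (4 * Hn n) / (5 : ℝ) ^ (5 * L) := by
    rw [probOf, hden]
    rw [div_le_div_iff₀ (by positivity) h5pos]
    calc (Nat.card {f : Fin n → Fin n // P f} : ℝ) * (5 : ℝ) ^ (5 * L)
        ≤ (n : ℝ) ^ n * Real.exp (4 * Hn n) := hcount
      _ = Real.exp (4 * Hn n) * (n : ℝ) ^ n := by ring
  have hexp : Real.exp (4 * Hn n) ≤ Real.exp 4 * (n : ℝ) ^ (4 : ℕ) := by
    calc Real.exp (4 * Hn n) ≤ Real.exp (4 * (1 + L)) :=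
          Real.exp_le_exp.2 (by nlinarith [Hn_le n])
      _ = Real.exp 4 * Real.exp ((4:ℕ) * L) := by
          rw [← Real.exp_add]; push_cast; ring_nf
      _ = Real.exp 4 * Real.exp L ^ (4:ℕ) := by rw [Real.exp_nat_mul]
      _ = Real.exp 4 * (n : ℝ) ^ (4 : ℕ) := by rw [hL, Real.exp_log hn0]
  have h5n : (5 : ℝ) ^ (5 * L) = (n : ℝ) ^ (5 * Real.log 5) := by
    rw [Real.rpow_def_of_pos (by norm_num : (0:ℝ) < 5), Real.rpow_def_of_pos hn0]
    congr 1
    rw [hL]; ring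
  calc (n : ℝ) ^ 4 * probOf (Fin n → Fin n) P
      ≤ (n : ℝ) ^ 4 * (Real.exp (4 * Hn n) / (5 : ℝ) ^ (5 * L)) := by
        refine mul_le_mul_of_nonneg_left hprob (by positivity)
    _ ≤ (n : ℝ) ^ 4 * ((Real.exp 4 * (n : ℝ) ^ (4:ℕ)) / (5 : ℝ) ^ (5 * L)) := by
        refine mul_le_mul_of_nonneg_left ?_ (by positivity)
        exact div_le_div_of_nonneg_right hexp h5pos.le
    _ = Real.exp 4 * ((n : ℝ) ^ (8:ℕ) / (n : ℝ) ^ (5 * Real.log 5)) := by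
        rw [h5n]; ring
    _ = Real.exp 4 * (n : ℝ) ^ ((8 : ℝ) - 5 * Real.log 5) := by
        rw [← Real.rpow_natCast (n:ℝ) 8, Real.rpow_sub hn0]
        norm_num

end Final

/-- For a uniformly random map `f : Fin n → Fin n`, the probability that the
number of cycles (clusters) of `f` exceeds `5·ln n` is `o(1/n⁴)`. -/
theorem stmt4 :
    Filter.Tendsto
      (fun n : ℕ => (n : ℝ) ^ 4 *
        probOf (Fin n → Fin n) (fun f => 5 * Real.log n < (numClusters f : ℝ)))
      Filter.atTop (nhds 0) := by
  have hc : (0 : ℝ) < 5 * Real.log 5 - 8 := by nlinarith [log_five_gt]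
  have hB : Filter.Tendsto (fun n : ℕ => Real.exp 4 * (n : ℝ) ^ ((8 : ℝ) - 5 * Real.log 5))
      Filter.atTop (nhds 0) := by
    have h1 : Filter.Tendsto (fun x : ℝ => x ^ (-(5 * Real.log 5 - 8)))
        Filter.atTop (nhds 0) := tendsto_rpow_neg_atTop hc
    have h2 : Filter.Tendsto (fun n : ℕ => ((n : ℝ)) ^ ((8 : ℝ) - 5 * Real.log 5))
        Filter.atTop (nhds 0) := by
      have := h1.comp tendsto_natCast_atTop_atTop (α := ℕ)
      simpa [Function.comp_def, neg_sub] using this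
    simpa using h2.const_mul (Real.exp 4)
  refine squeeze_zero' ?_ ?_ hB
  · filter_upwards [Filter.eventually_ge_atTop 1] with n _
    have : 0 ≤ probOf (Fin n → Fin n) (fun f => 5 * Real.log n < (numClusters f : ℝ)) := by
      rw [probOf]; positivity
    positivity
  · filter_upwards [Filter.eventually_ge_atTop 1] with n hn
    exact main_bound hn
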